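/- The Franel numbers a(n) = Σ_{k=0}^{n} C(n,k)^3 satisfy the recurrence (n+1)^2 a(n+1) = (7n^2+7n+2) a(n) + 8 n^2 a(n-1) for all n ≥ 1, with a(0)=1, a(1)=2. -/

import Mathlib

def franelS (n k : ℤ) : ℤ := -14*n^2 + 27*n*k - 60*n - 18*k^2 + 66*k - 68

def franelG (n j : ℕ) : ℤ :=
  4*((n:ℤ)+1)^2 * (n.choose j : ℤ)^3 + ((n+1).choose (j+1) : ℤ)^3 * franelS (n:ℤ) ((j:ℤ)+2)

lemma choose_ratio (n k : ℕ) :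
    ((k:ℤ)+1) * (n.choose (k+1) : ℤ) = ((n:ℤ) - k) * (n.choose k : ℤ) := by
  rcases le_or_gt k n with hk | hk
  · have h' := Nat.choose_succ_right_eq n k
    have hc : ((n.choose (k+1) * (k+1) : ℕ) : ℤ) = ((n.choose k * (n-k) : ℕ) : ℤ) := by
      exact_mod_cast congrArg (fun t : ℕ => (t : ℤ)) h'
    push_cast [Nat.cast_sub hk] at hc
    linarith
  · rw [Nat.choose_eq_zero_of_lt hk, Nat.choose_eq_zero_of_lt (by omega)]
    ring

lemma franel_key (n j : ℕ) :
    ((n:ℤ)+2)^2 * (((n+2).choose (j+2) : ℕ) : ℤ)^3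
      - (7*(n:ℤ)^2+21*(n:ℤ)+16) * (((n+1).choose (j+2) : ℕ) : ℤ)^3
      - 8*((n:ℤ)+1)^2 * ((n.choose (j+2) : ℕ) : ℤ)^3
    = franelG n (j+1) - franelG n j := by
  have h1 := choose_ratio n j
  have h2 := choose_ratio n (j+1)
  set x : ℤ := (n.choose j : ℤ) with hx
  set y : ℤ := (n.choose (j+1) : ℤ) with hy
  set z : ℤ := (n.choose (j+2) : ℤ) with hz
  have p1 : ((n+1).choose (j+1) : ℤ) = x + y := by
    rw [Nat.choose_succ_succ]; push_cast; ring
  have p2 : ((n+1).choose (j+2) : ℤ) = y + z := by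
    have h : (n+1).choose (j+2) = n.choose (j+1) + n.choose (j+2) := Nat.choose_succ_succ n (j+1)
    rw [h]; push_cast; ring
  have p3 : ((n+2).choose (j+2) : ℤ) = x + 2*y + z := by
    have h : (n+2).choose (j+2) = (n+1).choose (j+1) + (n+1).choose (j+2) :=
      Nat.choose_succ_succ (n+1) (j+1)
    rw [h]; push_cast; rw [p1, p2]; ring
  push_cast at h2
  simp only [franelG, franelS, p1, p2, p3]
  push_cast
  have key : (((j:ℤ)+1)^3*((j:ℤ)+2)^3) *
      (((n:ℤ)+2)^2 * (x + 2*y + z)^3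
        - (7*(n:ℤ)^2+21*(n:ℤ)+16) * (y + z)^3
        - 8*((n:ℤ)+1)^2 * z^3)
    = (((j:ℤ)+1)^3*((j:ℤ)+2)^3) *
      ((4*((n:ℤ)+1)^2 * y^3 + (y + z)^3 *
        (-14*(n:ℤ)^2 + 27*(n:ℤ)*((j:ℤ)+1+2) - 60*(n:ℤ) - 18*((j:ℤ)+1+2)^2 + 66*((j:ℤ)+1+2) - 68))
      - (4*((n:ℤ)+1)^2 * x^3 + (x + y)^3 *
        (-14*(n:ℤ)^2 + 27*(n:ℤ)*((j:ℤ)+2) - 60*(n:ℤ) - 18*((j:ℤ)+2)^2 + 66*((j:ℤ)+2) - 68))) := by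
    linear_combination ((36)*y*y + (24)*x*y + (-48)*x*x + (54)*(j:ℤ)*y*y + (-168)*(j:ℤ)*x*y + (-360)*(j:ℤ)*x*x + (-210)*(j:ℤ)*(j:ℤ)*y*y + (-1050)*(j:ℤ)*(j:ℤ)*x*y + (-1044)*(j:ℤ)*(j:ℤ)*x*x + (-690)*(j:ℤ)*(j:ℤ)*(j:ℤ)*y*y + (-2112)*(j:ℤ)*(j:ℤ)*(j:ℤ)*x*y + (-1566)*(j:ℤ)*(j:ℤ)*(j:ℤ)*x*x + (-828)*(j:ℤ)*(j:ℤ)*(j:ℤ)*(j:ℤ)*y*y + (-2112)*(j:ℤ)*(j:ℤ)*(j:ℤ)*(j:ℤ)*x*y + (-1332)*(j:ℤ)*(j:ℤ)*(j:ℤ)*(j:ℤ)*x*x + (-498)*(j:ℤ)*(j:ℤ)*(j:ℤ)*(j:ℤ)*(j:ℤ)*y*y + (-1140)*(j:ℤ)*(j:ℤ)*(j:ℤ)*(j:ℤ)*(j:ℤ)*x*y + (-648)*(j:ℤ)*(j:ℤ)*(j:ℤ)*(j:ℤ)*(j:ℤ)*x*x + (-150)*(j:ℤ)*(j:ℤ)*(j:ℤ)*(j:ℤ)*(j:ℤ)*(j:ℤ)*y*y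 + (-318)*(j:ℤ)*(j:ℤ)*(j:ℤ)*(j:ℤ)*(j:ℤ)*(j:ℤ)*x*y + (-168)*(j:ℤ)*(j:ℤ)*(j:ℤ)*(j:ℤ)*(j:ℤ)*(j:ℤ)*x*x + (-18)*(j:ℤ)*(j:ℤ)*(j:ℤ)*(j:ℤ)*(j:ℤ)*(j:ℤ)*(j:ℤ)*y*y + (-36)*(j:ℤ)*(j:ℤ)*(j:ℤ)*(j:ℤ)*(j:ℤ)*(j:ℤ)*(j:ℤ)*x*y + (-18)*(j:ℤ)*(j:ℤ)*(j:ℤ)*(j:ℤ)*(j:ℤ)*(j:ℤ)*(j:ℤ)*x*x + (102)*(n:ℤ)*y*y + (252)*(n:ℤ)*x*y + (72)*(n:ℤ)*x*x + (531)*(n:ℤ)*(j:ℤ)*y*y + (1152)*(n:ℤ)*(j:ℤ)*x*y + (324)*(n:ℤ)*(j:ℤ)*x*x + (1122)*(n:ℤ)*(j:ℤ)*(j:ℤ)*y*y + (2151)*(n:ℤ)*(j:ℤ)*(j:ℤ)*x*y + (594)*(n:ℤ)*(j:ℤ)*(j:ℤ)*x*x + (1227)*(n:ℤ)*(j:ℤ)*(j:ℤ)*(j:ℤ)*y*y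 + (2097)*(n:ℤ)*(j:ℤ)*(j:ℤ)*(j:ℤ)*x*y + (567)*(n:ℤ)*(j:ℤ)*(j:ℤ)*(j:ℤ)*x*x + (729)*(n:ℤ)*(j:ℤ)*(j:ℤ)*(j:ℤ)*(j:ℤ)*y*y + (1125)*(n:ℤ)*(j:ℤ)*(j:ℤ)*(j:ℤ)*(j:ℤ)*x*y + (297)*(n:ℤ)*(j:ℤ)*(j:ℤ)*(j:ℤ)*(j:ℤ)*x*x + (222)*(n:ℤ)*(j:ℤ)*(j:ℤ)*(j:ℤ)*(j:ℤ)*(j:ℤ)*y*y + (315)*(n:ℤ)*(j:ℤ)*(j:ℤ)*(j:ℤ)*(j:ℤ)*(j:ℤ)*x*y + (81)*(n:ℤ)*(j:ℤ)*(j:ℤ)*(j:ℤ)*(j:ℤ)*(j:ℤ)*x*x + (27)*(n:ℤ)*(j:ℤ)*(j:ℤ)*(j:ℤ)*(j:ℤ)*(j:ℤ)*(j:ℤ)*y*y + (36)*(n:ℤ)*(j:ℤ)*(j:ℤ)*(j:ℤ)*(j:ℤ)*(j:ℤ)*(j:ℤ)*x*y + (9)*(n:ℤ)*(j:ℤ)*(j:ℤ)*(j:ℤ)*(j:ℤ)*(j:ℤ)*(j:ℤ)*x*x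 + (-60)*(n:ℤ)*(n:ℤ)*y*y + (-12)*(n:ℤ)*(n:ℤ)*x*y + (-228)*(n:ℤ)*(n:ℤ)*(j:ℤ)*y*y + (-48)*(n:ℤ)*(n:ℤ)*(j:ℤ)*x*y + (-333)*(n:ℤ)*(n:ℤ)*(j:ℤ)*(j:ℤ)*y*y + (-75)*(n:ℤ)*(n:ℤ)*(j:ℤ)*(j:ℤ)*x*y + (-231)*(n:ℤ)*(n:ℤ)*(j:ℤ)*(j:ℤ)*(j:ℤ)*y*y + (-57)*(n:ℤ)*(n:ℤ)*(j:ℤ)*(j:ℤ)*(j:ℤ)*x*y + (-75)*(n:ℤ)*(n:ℤ)*(j:ℤ)*(j:ℤ)*(j:ℤ)*(j:ℤ)*y*y + (-21)*(n:ℤ)*(n:ℤ)*(j:ℤ)*(j:ℤ)*(j:ℤ)*(j:ℤ)*x*y + (-9)*(n:ℤ)*(n:ℤ)*(j:ℤ)*(j:ℤ)*(j:ℤ)*(j:ℤ)*(j:ℤ)*y*y + (-3)*(n:ℤ)*(n:ℤ)*(j:ℤ)*(j:ℤ)*(j:ℤ)*(j:ℤ)*(j:ℤ)*x*y + (-6)*(n:ℤ)*(n:ℤ)*(n:ℤ)*y*y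 + (-21)*(n:ℤ)*(n:ℤ)*(n:ℤ)*(j:ℤ)*y*y + (-27)*(n:ℤ)*(n:ℤ)*(n:ℤ)*(j:ℤ)*(j:ℤ)*y*y + (-15)*(n:ℤ)*(n:ℤ)*(n:ℤ)*(j:ℤ)*(j:ℤ)*(j:ℤ)*y*y + (-3)*(n:ℤ)*(n:ℤ)*(n:ℤ)*(j:ℤ)*(j:ℤ)*(j:ℤ)*(j:ℤ)*y*y) * h1 + ((48)*z*z + (264)*y*z + (252)*y*y + (48)*x*z + (168)*x*y + (48)*x*x + (360)*(j:ℤ)*z*z + (1464)*(j:ℤ)*y*z + (1242)*(j:ℤ)*y*y + (192)*(j:ℤ)*x*z + (660)*(j:ℤ)*x*y + (192)*(j:ℤ)*x*x + (1044)*(j:ℤ)*(j:ℤ)*z*z + (3426)*(j:ℤ)*(j:ℤ)*y*z + (2586)*(j:ℤ)*(j:ℤ)*y*y + (300)*(j:ℤ)*(j:ℤ)*x*z + (1008)*(j:ℤ)*(j:ℤ)*x*y + (300)*(j:ℤ)*(j:ℤ)*x*x + (1566)*(j:ℤ)*(j:ℤ)*(j:ℤ)*z*z + (4380)*(j:ℤ)*(j:ℤ)*(j:ℤ)*y*z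 + (2958)*(j:ℤ)*(j:ℤ)*(j:ℤ)*y*y + (228)*(j:ℤ)*(j:ℤ)*(j:ℤ)*x*z + (744)*(j:ℤ)*(j:ℤ)*(j:ℤ)*x*y + (228)*(j:ℤ)*(j:ℤ)*(j:ℤ)*x*x + (1332)*(j:ℤ)*(j:ℤ)*(j:ℤ)*(j:ℤ)*z*z + (3300)*(j:ℤ)*(j:ℤ)*(j:ℤ)*(j:ℤ)*y*z + (2016)*(j:ℤ)*(j:ℤ)*(j:ℤ)*(j:ℤ)*y*y + (84)*(j:ℤ)*(j:ℤ)*(j:ℤ)*(j:ℤ)*x*z + (264)*(j:ℤ)*(j:ℤ)*(j:ℤ)*(j:ℤ)*x*y + (84)*(j:ℤ)*(j:ℤ)*(j:ℤ)*(j:ℤ)*x*x + (648)*(j:ℤ)*(j:ℤ)*(j:ℤ)*(j:ℤ)*(j:ℤ)*z*z + (1464)*(j:ℤ)*(j:ℤ)*(j:ℤ)*(j:ℤ)*(j:ℤ)*y*z + (822)*(j:ℤ)*(j:ℤ)*(j:ℤ)*(j:ℤ)*(j:ℤ)*y*y + (12)*(j:ℤ)*(j:ℤ)*(j:ℤ)*(j:ℤ)*(j:ℤ)*x*z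 + (36)*(j:ℤ)*(j:ℤ)*(j:ℤ)*(j:ℤ)*(j:ℤ)*x*y + (12)*(j:ℤ)*(j:ℤ)*(j:ℤ)*(j:ℤ)*(j:ℤ)*x*x + (168)*(j:ℤ)*(j:ℤ)*(j:ℤ)*(j:ℤ)*(j:ℤ)*(j:ℤ)*z*z + (354)*(j:ℤ)*(j:ℤ)*(j:ℤ)*(j:ℤ)*(j:ℤ)*(j:ℤ)*y*z + (186)*(j:ℤ)*(j:ℤ)*(j:ℤ)*(j:ℤ)*(j:ℤ)*(j:ℤ)*y*y + (18)*(j:ℤ)*(j:ℤ)*(j:ℤ)*(j:ℤ)*(j:ℤ)*(j:ℤ)*(j:ℤ)*z*z + (36)*(j:ℤ)*(j:ℤ)*(j:ℤ)*(j:ℤ)*(j:ℤ)*(j:ℤ)*(j:ℤ)*y*z + (18)*(j:ℤ)*(j:ℤ)*(j:ℤ)*(j:ℤ)*(j:ℤ)*(j:ℤ)*(j:ℤ)*y*y + (-216)*(n:ℤ)*z*z + (-276)*(n:ℤ)*y*z + (-42)*(n:ℤ)*y*y + (48)*(n:ℤ)*x*z + (192)*(n:ℤ)*x*y + (48)*(n:ℤ)*x*x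 + (-972)*(n:ℤ)*(j:ℤ)*z*z + (-1248)*(n:ℤ)*(j:ℤ)*y*z + (-213)*(n:ℤ)*(j:ℤ)*y*y + (192)*(n:ℤ)*(j:ℤ)*x*z + (744)*(n:ℤ)*(j:ℤ)*x*y + (192)*(n:ℤ)*(j:ℤ)*x*x + (-1782)*(n:ℤ)*(j:ℤ)*(j:ℤ)*z*z + (-2301)*(n:ℤ)*(j:ℤ)*(j:ℤ)*y*z + (-438)*(n:ℤ)*(j:ℤ)*(j:ℤ)*y*y + (300)*(n:ℤ)*(j:ℤ)*(j:ℤ)*x*z + (1116)*(n:ℤ)*(j:ℤ)*(j:ℤ)*x*y + (300)*(n:ℤ)*(j:ℤ)*(j:ℤ)*x*x + (-1701)*(n:ℤ)*(j:ℤ)*(j:ℤ)*(j:ℤ)*z*z + (-2211)*(n:ℤ)*(j:ℤ)*(j:ℤ)*(j:ℤ)*y*z + (-465)*(n:ℤ)*(j:ℤ)*(j:ℤ)*(j:ℤ)*y*y + (228)*(n:ℤ)*(j:ℤ)*(j:ℤ)*(j:ℤ)*x*z + (804)*(n:ℤ)*(j:ℤ)*(j:ℤ)*(j:ℤ)*x*y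 + (228)*(n:ℤ)*(j:ℤ)*(j:ℤ)*(j:ℤ)*x*x + (-891)*(n:ℤ)*(j:ℤ)*(j:ℤ)*(j:ℤ)*(j:ℤ)*z*z + (-1167)*(n:ℤ)*(j:ℤ)*(j:ℤ)*(j:ℤ)*(j:ℤ)*y*z + (-267)*(n:ℤ)*(j:ℤ)*(j:ℤ)*(j:ℤ)*(j:ℤ)*y*y + (84)*(n:ℤ)*(j:ℤ)*(j:ℤ)*(j:ℤ)*(j:ℤ)*x*z + (276)*(n:ℤ)*(j:ℤ)*(j:ℤ)*(j:ℤ)*(j:ℤ)*x*y + (84)*(n:ℤ)*(j:ℤ)*(j:ℤ)*(j:ℤ)*(j:ℤ)*x*x + (-243)*(n:ℤ)*(j:ℤ)*(j:ℤ)*(j:ℤ)*(j:ℤ)*(j:ℤ)*z*z + (-321)*(n:ℤ)*(j:ℤ)*(j:ℤ)*(j:ℤ)*(j:ℤ)*(j:ℤ)*y*z + (-78)*(n:ℤ)*(j:ℤ)*(j:ℤ)*(j:ℤ)*(j:ℤ)*(j:ℤ)*y*y + (12)*(n:ℤ)*(j:ℤ)*(j:ℤ)*(j:ℤ)*(j:ℤ)*(j:ℤ)*x*z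 + (36)*(n:ℤ)*(j:ℤ)*(j:ℤ)*(j:ℤ)*(j:ℤ)*(j:ℤ)*x*y + (12)*(n:ℤ)*(j:ℤ)*(j:ℤ)*(j:ℤ)*(j:ℤ)*(j:ℤ)*x*x + (-27)*(n:ℤ)*(j:ℤ)*(j:ℤ)*(j:ℤ)*(j:ℤ)*(j:ℤ)*(j:ℤ)*z*z + (-36)*(n:ℤ)*(j:ℤ)*(j:ℤ)*(j:ℤ)*(j:ℤ)*(j:ℤ)*(j:ℤ)*y*z + (-9)*(n:ℤ)*(j:ℤ)*(j:ℤ)*(j:ℤ)*(j:ℤ)*(j:ℤ)*(j:ℤ)*y*y + (-6)*(n:ℤ)*(n:ℤ)*y*y + (12)*(n:ℤ)*(n:ℤ)*x*z + (66)*(n:ℤ)*(n:ℤ)*x*y + (12)*(n:ℤ)*(n:ℤ)*x*x + (-27)*(n:ℤ)*(n:ℤ)*(j:ℤ)*y*y + (48)*(n:ℤ)*(n:ℤ)*(j:ℤ)*x*z + (249)*(n:ℤ)*(n:ℤ)*(j:ℤ)*x*y + (48)*(n:ℤ)*(n:ℤ)*(j:ℤ)*x*x + (-48)*(n:ℤ)*(n:ℤ)*(j:ℤ)*(j:ℤ)*y*y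 + (75)*(n:ℤ)*(n:ℤ)*(j:ℤ)*(j:ℤ)*x*z + (360)*(n:ℤ)*(n:ℤ)*(j:ℤ)*(j:ℤ)*x*y + (75)*(n:ℤ)*(n:ℤ)*(j:ℤ)*(j:ℤ)*x*x + (-42)*(n:ℤ)*(n:ℤ)*(j:ℤ)*(j:ℤ)*(j:ℤ)*y*y + (57)*(n:ℤ)*(n:ℤ)*(j:ℤ)*(j:ℤ)*(j:ℤ)*x*z + (246)*(n:ℤ)*(n:ℤ)*(j:ℤ)*(j:ℤ)*(j:ℤ)*x*y + (57)*(n:ℤ)*(n:ℤ)*(j:ℤ)*(j:ℤ)*(j:ℤ)*x*x + (-18)*(n:ℤ)*(n:ℤ)*(j:ℤ)*(j:ℤ)*(j:ℤ)*(j:ℤ)*y*y + (21)*(n:ℤ)*(n:ℤ)*(j:ℤ)*(j:ℤ)*(j:ℤ)*(j:ℤ)*x*z + (78)*(n:ℤ)*(n:ℤ)*(j:ℤ)*(j:ℤ)*(j:ℤ)*(j:ℤ)*x*y + (21)*(n:ℤ)*(n:ℤ)*(j:ℤ)*(j:ℤ)*(j:ℤ)*(j:ℤ)*x*x + (-3)*(n:ℤ)*(n:ℤ)*(j:ℤ)*(j:ℤ)*(j:ℤ)*(j:ℤ)*(j:ℤ)*y*y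 + (3)*(n:ℤ)*(n:ℤ)*(j:ℤ)*(j:ℤ)*(j:ℤ)*(j:ℤ)*(j:ℤ)*x*z + (9)*(n:ℤ)*(n:ℤ)*(j:ℤ)*(j:ℤ)*(j:ℤ)*(j:ℤ)*(j:ℤ)*x*y + (3)*(n:ℤ)*(n:ℤ)*(j:ℤ)*(j:ℤ)*(j:ℤ)*(j:ℤ)*(j:ℤ)*x*x + (6)*(n:ℤ)*(n:ℤ)*(n:ℤ)*x*y + (21)*(n:ℤ)*(n:ℤ)*(n:ℤ)*(j:ℤ)*x*y + (27)*(n:ℤ)*(n:ℤ)*(n:ℤ)*(j:ℤ)*(j:ℤ)*x*y + (15)*(n:ℤ)*(n:ℤ)*(n:ℤ)*(j:ℤ)*(j:ℤ)*(j:ℤ)*x*y + (3)*(n:ℤ)*(n:ℤ)*(n:ℤ)*(j:ℤ)*(j:ℤ)*(j:ℤ)*(j:ℤ)*x*y) * h2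
  have hD : (((j:ℤ)+1)^3*((j:ℤ)+2)^3) ≠ 0 := by positivity
  have := mul_left_cancel₀ hD key
  linarith [this]

open Finset in
lemma franel_sum (m : ℕ) :
    ∑ k ∈ Finset.range (m+3),
      (((m:ℤ)+2)^2 * (((m+2).choose k : ℕ) : ℤ)^3
        - (7*(m:ℤ)^2+21*(m:ℤ)+16) * (((m+1).choose k : ℕ) : ℤ)^3
        - 8*((m:ℤ)+1)^2 * ((m.choose k : ℕ) : ℤ)^3) = 0 := by
  rw [show m+3 = (m+2)+1 from rfl, Finset.sum_range_succ', show m+2 = (m+1)+1 from rfl,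
    Finset.sum_range_succ']
  have step : ∀ j ∈ Finset.range (m+1),
      (((m:ℤ)+2)^2 * (((m+2).choose (j+1+1) : ℕ) : ℤ)^3
        - (7*(m:ℤ)^2+21*(m:ℤ)+16) * (((m+1).choose (j+1+1) : ℕ) : ℤ)^3
        - 8*((m:ℤ)+1)^2 * ((m.choose (j+1+1) : ℕ) : ℤ)^3)
      = franelG m (j+1) - franelG m j := by
    intro j _
    exact franel_key m j
  rw [Finset.sum_congr rfl step, Finset.sum_range_sub (franelG m)]
  have hG : franelG m (m+1) = 0 := by
    simp [franelG, Nat.choose_succ_self, Nat.choose_eq_zero_of_lt]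
  rw [hG]
  simp [franelG, franelS, Nat.choose_zero_right, Nat.choose_one_right,
    Nat.choose_self, Nat.choose_succ_self]
  ring

/-- The Franel numbers `a n = ∑ k, (n.choose k)^3` satisfy the recurrence
`(n+1)² a(n+1) = (7n²+7n+2) a(n) + 8 n² a(n-1)` for all `n ≥ 1`,
with `a 0 = 1` and `a 1 = 2`. -/
theorem franel_recurrence (a : ℕ → ℕ)
    (ha : ∀ n, a n = ∑ k ∈ Finset.range (n + 1), (Nat.choose n k) ^ 3) :
    a 0 = 1 ∧ a 1 = 2 ∧
      ∀ n, 1 ≤ n →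
        (n + 1) ^ 2 * a (n + 1) = (7 * n ^ 2 + 7 * n + 2) * a n + 8 * n ^ 2 * a (n - 1) := by
  refine ⟨by simp [ha], by simp [ha, Finset.sum_range_succ], ?_⟩
  intro n hn
  obtain ⟨m, rfl⟩ : ∃ m, n = m + 1 := ⟨n - 1, by omega⟩
  have hsum := franel_sum m
  rw [Finset.sum_sub_distrib, Finset.sum_sub_distrib, ← Finset.mul_sum, ← Finset.mul_sum,
    ← Finset.mul_sum] at hsum
  have e1 : ∑ k ∈ Finset.range (m+3), (((m+1).choose k : ℕ) : ℤ)^3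
      = ∑ k ∈ Finset.range (m+2), (((m+1).choose k : ℕ) : ℤ)^3 := by
    rw [show m+3 = (m+2)+1 from rfl, Finset.sum_range_succ,
      Nat.choose_eq_zero_of_lt (by omega)]
    simp
  have e0 : ∑ k ∈ Finset.range (m+3), ((m.choose k : ℕ) : ℤ)^3
      = ∑ k ∈ Finset.range (m+1), ((m.choose k : ℕ) : ℤ)^3 := by
    rw [show m+3 = (m+2)+1 from rfl, Finset.sum_range_succ, show m+2 = (m+1)+1 from rfl,
      Finset.sum_range_succ, Nat.choose_eq_zero_of_lt (by omega),
      Nat.choose_eq_zero_of_lt (by omega)]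
    simp
  rw [e1, e0] at hsum
  have key : ((m:ℤ)+2)^2 * ∑ k ∈ Finset.range (m+3), (((m+2).choose k : ℕ) : ℤ)^3
      = (7*(m:ℤ)^2+21*(m:ℤ)+16) * ∑ k ∈ Finset.range (m+2), (((m+1).choose k : ℕ) : ℤ)^3
        + 8*((m:ℤ)+1)^2 * ∑ k ∈ Finset.range (m+1), ((m.choose k : ℕ) : ℤ)^3 := by
    linarith
  have h2 : a (m+2) = ∑ k ∈ Finset.range (m+3), ((m+2).choose k)^3 := ha (m+2)
  have h1 : a (m+1) = ∑ k ∈ Finset.range (m+2), ((m+1).choose k)^3 := ha (m+1)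
  have h0 : a m = ∑ k ∈ Finset.range (m+1), (m.choose k)^3 := ha m
  have goalZ : ((m:ℤ)+2)^2 * (a (m+2) : ℤ)
      = (7*((m:ℤ)+1)^2+7*((m:ℤ)+1)+2) * (a (m+1) : ℤ) + 8*((m:ℤ)+1)^2 * (a m : ℤ) := by
    rw [h2, h1, h0]
    push_cast
    rw [show (7*((m:ℤ)+1)^2+7*((m:ℤ)+1)+2) = 7*(m:ℤ)^2+21*(m:ℤ)+16 by ring]
    exact key
  have : m + 1 - 1 = m := by omega
  rw [this]
  exact_mod_cast goalZ
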